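/- arXiv:1308.6388 — 2 statements merged into one kernel-verified Lean document; each statement's English description precedes it below -/
import Mathlib

section
/- Let M ≤ N be positive integers. For every X ∈ Ω one has tr(XᵀX) ≤ M, with equality if and only if X ∈ Π. Consequently, the set of minimizers over Ω of the concave function X ↦ −tr(XᵀX) is exactly Π (the minima of the terminal concave objective of GNCGCP locate exactly at the partial permutation matrices). -/
open Matrix BigOperators

def Omega (M N : ℕ) : Set (Matrix (Fin M) (Fin N) ℝ) :=
  {X | (∀ i j, 0 ≤ X i j) ∧ (∀ i, ∑ j, X i j = 1) ∧ (∀ j, ∑ i, X i j ≤ 1)}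

def PartialPerm (M N : ℕ) : Set (Matrix (Fin M) (Fin N) ℝ) :=
  {X | (∀ i j, X i j = 0 ∨ X i j = 1) ∧ (∀ i, ∑ j, X i j = 1) ∧ (∀ j, ∑ i, X i j ≤ 1)}

def minimizersOn {E : Type*} (S : Set E) (G : E → ℝ) : Set E :=
  {X ∈ S | ∀ Y ∈ S, G X ≤ G Y}

lemma trace_formula {M N : ℕ} (X : Matrix (Fin M) (Fin N) ℝ) :
    (Xᵀ * X).trace = ∑ i, ∑ j, X i j * X i j := by
  rw [Matrix.trace]
  simp only [Matrix.diag, Matrix.mul_apply, Matrix.transpose_apply]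
  rw [Finset.sum_comm]

lemma ppe_omega (M N : ℕ) : PartialPerm M N ⊆ Omega M N := by
  rintro X ⟨h01, hr, hc⟩
  exact ⟨fun i j => by rcases h01 i j with h | h <;> simp [h], hr, hc⟩

lemma trace_of_pp {M N : ℕ} (X : Matrix (Fin M) (Fin N) ℝ) (hX : X ∈ PartialPerm M N) :
    (Xᵀ * X).trace = (M : ℝ) := by
  obtain ⟨h01, hr, _⟩ := hX
  rw [trace_formula]
  calc ∑ i, ∑ j, X i j * X i j = ∑ i : Fin M, (1 : ℝ) := by
        refine Finset.sum_congr rfl fun i _ => ?_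
        rw [← hr i]
        refine Finset.sum_congr rfl fun j _ => ?_
        rcases h01 i j with h | h <;> simp [h]
    _ = (M : ℝ) := by simp

/-- For every `X ∈ Ω`, `tr(XᵀX) ≤ M` with equality iff `X ∈ Π`; hence the minimizers of
`X ↦ -tr(XᵀX)` over Ω are exactly the partial permutation matrices. -/
theorem trace_sq_le_and_minimizers (M N : ℕ) (hM : 0 < M) (hMN : M ≤ N) :
    (∀ X ∈ Omega M N,
        (Xᵀ * X).trace ≤ (M : ℝ) ∧ ((Xᵀ * X).trace = (M : ℝ) ↔ X ∈ PartialPerm M N)) ∧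
      minimizersOn (Omega M N) (fun X => -(Xᵀ * X).trace) = PartialPerm M N := by
  have key : ∀ X ∈ Omega M N,
      (Xᵀ * X).trace ≤ (M : ℝ) ∧ ((Xᵀ * X).trace = (M : ℝ) ↔ X ∈ PartialPerm M N) := by
    rintro X ⟨hnn, hr, hc⟩
    have hle1 : ∀ i j, X i j ≤ 1 := fun i j => by
      rw [← hr i]
      exact Finset.single_le_sum (fun k _ => hnn i k) (Finset.mem_univ j)
    have hterm : ∀ i j, X i j * X i j ≤ X i j := fun i j =>
      mul_le_of_le_one_right (hnn i j) (hle1 i j)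
    have hsum : (M : ℝ) = ∑ i : Fin M, ∑ j, X i j := by
      simp [hr]
    have hle : (Xᵀ * X).trace ≤ (M : ℝ) := by
      rw [trace_formula, hsum]
      exact Finset.sum_le_sum fun i _ => Finset.sum_le_sum fun j _ => hterm i j
    refine ⟨hle, ?_, trace_of_pp X⟩
    intro heq
    refine ⟨fun i j => ?_, hr, hc⟩
    have h1 : ∑ i : Fin M, ∑ j, X i j * X i j = ∑ i : Fin M, ∑ j, X i j := by
      rw [← trace_formula, heq, hsum]
    have h2 := (Finset.sum_eq_sum_iff_of_le
      (fun i _ => Finset.sum_le_sum fun j _ => hterm i j)).mp h1 i (Finset.mem_univ i)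
    have h3 := (Finset.sum_eq_sum_iff_of_le (fun j _ => hterm i j)).mp h2 j (Finset.mem_univ j)
    have : X i j * (X i j - 1) = 0 := by ring_nf; linarith [h3]
    rcases mul_eq_zero.mp this with h | h
    · exact Or.inl h
    · exact Or.inr (by linarith)
  refine ⟨key, ?_⟩
  -- a canonical partial permutation matrix
  set X0 : Matrix (Fin M) (Fin N) ℝ := fun i j => if (Fin.castLE hMN i) = j then 1 else 0 with hX0
  have hX0pp : X0 ∈ PartialPerm M N := by
    refine ⟨fun i j => by by_cases h : (Fin.castLE hMN i) = j <;> simp [hX0, h], fun i => by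
      simp [hX0], fun j => ?_⟩
    have : ∑ i : Fin M, X0 i j = if ∃ i : Fin M, Fin.castLE hMN i = j then 1 else 0 := by
      rcases Classical.em (∃ i : Fin M, Fin.castLE hMN i = j) with ⟨i, hi⟩ | h
      · rw [if_pos ⟨i, hi⟩, Finset.sum_eq_single i]
        · simp [hX0, hi]
        · intro k _ hk
          simp only [hX0]
          rw [if_neg]
          intro hc
          exact hk (by
            apply Fin.castLE_injective hMN
            rw [hi, hc])
        · simp
      · rw [if_neg h]
        apply Finset.sum_eq_zero
        intro i _
        simp only [hX0]
        rw [if_neg (fun hc => h ⟨i, hc⟩)]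
    rw [this]
    split <;> norm_num
  ext X
  simp only [minimizersOn, Set.mem_setOf_eq]
  constructor
  · rintro ⟨hXΩ, hmin⟩
    have h0 := hmin X0 (ppe_omega M N hX0pp)
    have h0tr : (X0ᵀ * X0).trace = (M : ℝ) := trace_of_pp X0 hX0pp
    have := (key X hXΩ).2.mp (le_antisymm (key X hXΩ).1 (by linarith [neg_le_neg_iff.mp h0, h0tr] ))
    exact this
  · intro hX
    refine ⟨ppe_omega M N hX, fun Y hY => ?_⟩
    have := (key Y hY).1
    have hXtr := trace_of_pp X hX
    linarith
end

section
/- Let M ≤ N be positive integers. The set of extreme points of the compact convex polytope Ω is exactly Π, the set of partial permutation matrices. -/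
open Matrix BigOperators

lemma omega_le_one {M N : ℕ} {X : Matrix (Fin M) (Fin N) ℝ} (hX : X ∈ Omega M N)
    (i : Fin M) (j : Fin N) : X i j ≤ 1 := by
  refine le_trans ?_ (hX.2.2 j)
  exact Finset.single_le_sum (fun i' _ => hX.1 i' j) (Finset.mem_univ i)

lemma omega_isCompact (M N : ℕ) : IsCompact (Omega M N) := by
  have hsub : Omega M N ⊆ Set.pi Set.univ (fun _ : Fin M =>
      Set.pi Set.univ (fun _ : Fin N => Set.Icc (0:ℝ) 1)) := by
    intro X hX i _ j _
    exact ⟨hX.1 i j, omega_le_one hX i j⟩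
  have hcomp : IsCompact (Set.pi Set.univ (fun _ : Fin M =>
      Set.pi Set.univ (fun _ : Fin N => Set.Icc (0:ℝ) 1))) :=
    isCompact_univ_pi fun _ => isCompact_univ_pi fun _ => isCompact_Icc
  refine hcomp.of_isClosed_subset ?_ hsub
  have hcont : ∀ (i : Fin M) (j : Fin N),
      Continuous fun X : Matrix (Fin M) (Fin N) ℝ => X i j := fun i j =>
    (continuous_apply j).comp (continuous_apply i)
  have h1 : IsClosed {X : Matrix (Fin M) (Fin N) ℝ | ∀ i j, 0 ≤ X i j} := by
    have : {X : Matrix (Fin M) (Fin N) ℝ | ∀ i j, 0 ≤ X i j} =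
        ⋂ i, ⋂ j, {X : Matrix (Fin M) (Fin N) ℝ | 0 ≤ X i j} := by
      ext X; simp
    rw [this]
    exact isClosed_iInter fun i => isClosed_iInter fun j =>
      isClosed_le continuous_const (hcont i j)
  have h2 : IsClosed {X : Matrix (Fin M) (Fin N) ℝ | ∀ i, ∑ j, X i j = 1} := by
    have : {X : Matrix (Fin M) (Fin N) ℝ | ∀ i, ∑ j, X i j = 1} =
        ⋂ i, {X : Matrix (Fin M) (Fin N) ℝ | ∑ j, X i j = 1} := by ext X; simp
    rw [this]
    exact isClosed_iInter fun i =>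
      isClosed_eq (continuous_finset_sum _ fun j _ => hcont i j) continuous_const
  have h3 : IsClosed {X : Matrix (Fin M) (Fin N) ℝ | ∀ j, ∑ i, X i j ≤ 1} := by
    have : {X : Matrix (Fin M) (Fin N) ℝ | ∀ j, ∑ i, X i j ≤ 1} =
        ⋂ j, {X : Matrix (Fin M) (Fin N) ℝ | ∑ i, X i j ≤ 1} := by ext X; simp
    rw [this]
    exact isClosed_iInter fun j =>
      isClosed_le (continuous_finset_sum _ fun i _ => hcont i j) continuous_const
  have : Omega M N = {X : Matrix (Fin M) (Fin N) ℝ | ∀ i j, 0 ≤ X i j} ∩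
      ({X | ∀ i, ∑ j, X i j = 1} ∩ {X | ∀ j, ∑ i, X i j ≤ 1}) := rfl
  rw [this]
  exact h1.inter (h2.inter h3)

lemma omega_convex (M N : ℕ) : Convex ℝ (Omega M N) := by
  intro X hX Y hY a b ha hb hab
  have happ : ∀ i j, (a • X + b • Y) i j = a * X i j + b * Y i j := by
    intro i j; simp [Matrix.add_apply, Matrix.smul_apply, smul_eq_mul]
  refine ⟨fun i j => ?_, fun i => ?_, fun j => ?_⟩
  · rw [happ]
    have := hX.1 i j; have := hY.1 i j; positivity
  · simp only [happ, Finset.sum_add_distrib, ← Finset.mul_sum, hX.2.1 i, hY.2.1 i]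
    linarith
  · simp only [happ, Finset.sum_add_distrib, ← Finset.mul_sum]
    have := hX.2.2 j; have := hY.2.2 j
    nlinarith

lemma partialPerm_subset_extreme {M N : ℕ} :
    PartialPerm M N ⊆ Set.extremePoints ℝ (Omega M N) := by
  intro P hP
  have hPO : P ∈ Omega M N := by
    refine ⟨fun i j => ?_, hP.2.1, hP.2.2⟩
    rcases hP.1 i j with h | h <;> rw [h] <;> norm_num
  rw [mem_extremePoints]
  refine ⟨hPO, fun Y hY Z hZ hseg => ?_⟩
  obtain ⟨a, b, ha, hb, hab, hsum⟩ := hseg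
  -- zero entries force zero entries of Y, Z
  have hzero : ∀ i j, P i j = 0 → Y i j = 0 ∧ Z i j = 0 := by
    intro i j h0
    have heq : a * Y i j + b * Z i j = 0 := by
      have := congrFun (congrFun hsum i) j
      simpa [Matrix.add_apply, Matrix.smul_apply, smul_eq_mul, h0] using this
    have hy := hY.1 i j; have hz := hZ.1 i j
    constructor <;> nlinarith
  have key : ∀ W : Matrix (Fin M) (Fin N) ℝ, W ∈ Omega M N →
      (∀ i j, P i j = 0 → W i j = 0) → W = P := by
    intro W hW hWz
    funext i j
    rcases hP.1 i j with h0 | h1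
    · rw [hWz i j h0, h0]
    · -- all other entries of P in row i are 0
      have hothers : ∀ j' ∈ Finset.univ.erase j, P i j' = 0 := by
        have hsum1 : P i j + ∑ j' ∈ Finset.univ.erase j, P i j' = 1 := by
          rw [Finset.add_sum_erase _ _ (Finset.mem_univ j)]; exact hP.2.1 i
        have hrest : ∑ j' ∈ Finset.univ.erase j, P i j' = 0 := by
          rw [h1] at hsum1; linarith
        intro j' hj'
        have hnn : ∀ j'' ∈ Finset.univ.erase j, 0 ≤ P i j'' := by
          intro j'' _; rcases hP.1 i j'' with h | h <;> rw [h] <;> norm_num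
        exact (Finset.sum_eq_zero_iff_of_nonneg hnn).mp hrest j' hj'
      have hWothers : ∀ j' ∈ Finset.univ.erase j, W i j' = 0 := fun j' hj' =>
        hWz i j' (hothers j' hj')
      have : W i j + ∑ j' ∈ Finset.univ.erase j, W i j' = 1 := by
        rw [Finset.add_sum_erase _ _ (Finset.mem_univ j)]; exact hW.2.1 i
      rw [Finset.sum_eq_zero hWothers] at this
      rw [h1]; linarith
  exact ⟨key Y hY fun i j h => (hzero i j h).1, key Z hZ fun i j h => (hzero i j h).2⟩


section Ext
variable {M N : ℕ} (Fs : Finset (Fin M × Fin N))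

def ext0 (d : {p // p ∈ Fs} → ℝ) : Matrix (Fin M) (Fin N) ℝ :=
  fun i j => if h : (i, j) ∈ Fs then d ⟨(i, j), h⟩ else 0

lemma ext0_add (d₁ d₂ : {p // p ∈ Fs} → ℝ) :
    ext0 Fs (d₁ + d₂) = ext0 Fs d₁ + ext0 Fs d₂ := by
  funext i j
  simp only [ext0, Matrix.add_apply]
  split_ifs <;> simp

lemma ext0_smul (c : ℝ) (d : {p // p ∈ Fs} → ℝ) : ext0 Fs (c • d) = c • ext0 Fs d := by
  funext i j
  simp only [ext0, Matrix.smul_apply, smul_eq_mul]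
  split_ifs <;> simp

lemma ext0_eq_zero_of_not_mem (d : {p // p ∈ Fs} → ℝ) {i : Fin M} {j : Fin N}
    (h : (i, j) ∉ Fs) : ext0 Fs d i j = 0 := dif_neg h

lemma ext0_coe (d : {p // p ∈ Fs} → ℝ) (p : {p // p ∈ Fs}) :
    ext0 Fs d (p : Fin M × Fin N).1 (p : Fin M × Fin N).2 = d p := by
  have hp : ((p : Fin M × Fin N).1, (p : Fin M × Fin N).2) ∈ Fs := by simpa using p.2
  simp only [ext0, dif_pos hp]

lemma sum_sum_ext0 (d : {p // p ∈ Fs} → ℝ) :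
    ∑ i, ∑ j, ext0 Fs d i j = ∑ p : {p // p ∈ Fs}, d p := by
  have hprod : ∑ i, ∑ j, ext0 Fs d i j =
      ∑ p ∈ Finset.univ ×ˢ Finset.univ, ext0 Fs d p.1 p.2 :=
    (Finset.sum_product' (s := Finset.univ) (t := Finset.univ)
      (f := fun i j => ext0 Fs d i j)).symm
  rw [hprod, Finset.univ_product_univ,
    ← Finset.sum_subset (Finset.subset_univ Fs)
      (fun p _ hp => ext0_eq_zero_of_not_mem Fs d (by simpa using hp)),
    ← Finset.sum_attach Fs (fun p => ext0 Fs d p.1 p.2)]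
  exact Finset.sum_congr rfl fun p _ => ext0_coe Fs d p

variable (Rs : Finset (Fin M)) (Ts : Finset (Fin N))

def Lmap : ({p // p ∈ Fs} → ℝ) →ₗ[ℝ] ({i // i ∈ Rs} → ℝ) × ({j // j ∈ Ts} → ℝ) where
  toFun d := (fun i : {i // i ∈ Rs} => ∑ j, ext0 Fs d (i : Fin M) j,
    fun j : {j // j ∈ Ts} => ∑ i, ext0 Fs d i (j : Fin N))
  map_add' d₁ d₂ := by
    refine Prod.ext ?_ ?_ <;> funext k <;> simp [ext0_add, Finset.sum_add_distrib]
  map_smul' c d := by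
    refine Prod.ext ?_ ?_ <;> funext k <;> simp [ext0_smul, Finset.mul_sum]

lemma Lmap_apply (d : {p // p ∈ Fs} → ℝ) :
    Lmap Fs Rs Ts d = (fun i : {i // i ∈ Rs} => ∑ j, ext0 Fs d (i : Fin M) j,
      fun j : {j // j ∈ Ts} => ∑ i, ext0 Fs d i (j : Fin N)) := rfl

def phiMap : (({i // i ∈ Rs} → ℝ) × ({j // j ∈ Ts} → ℝ)) →ₗ[ℝ] ℝ where
  toFun rc := ∑ i, rc.1 i - ∑ j, rc.2 j
  map_add' rc rc' := by simp [Finset.sum_add_distrib]; ring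
  map_smul' c rc := by simp [Finset.mul_sum, Finset.sum_sub_distrib, mul_sub]

lemma phiMap_apply (rc : ({i // i ∈ Rs} → ℝ) × ({j // j ∈ Ts} → ℝ)) :
    phiMap Rs Ts rc = ∑ i, rc.1 i - ∑ j, rc.2 j := rfl

end Ext

lemma exists_perturbation {M N : ℕ} {X : Matrix (Fin M) (Fin N) ℝ} (hX : X ∈ Omega M N)
    (hfrac : ∃ i j, X i j ≠ 0 ∧ X i j ≠ 1) :
    ∃ D : Matrix (Fin M) (Fin N) ℝ, D ≠ 0 ∧
      (∀ i j, D i j ≠ 0 → X i j ≠ 0 ∧ X i j ≠ 1) ∧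
      (∀ i, ∑ j, D i j = 0) ∧
      (∀ j, ∑ i, X i j = 1 → ∑ i, D i j = 0) := by
  classical
  set Fs : Finset (Fin M × Fin N) :=
    Finset.univ.filter (fun p => X p.1 p.2 ≠ 0 ∧ X p.1 p.2 ≠ 1) with hFs
  have hmemFs : ∀ p : Fin M × Fin N, p ∈ Fs ↔ (X p.1 p.2 ≠ 0 ∧ X p.1 p.2 ≠ 1) := by
    intro p; simp [hFs]
  have hrow2 : ∀ i j, (i, j) ∈ Fs → ∃ j', j' ≠ j ∧ (i, j') ∈ Fs := by
    intro i j hij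
    rw [hmemFs] at hij
    by_contra h
    push_neg at h
    have hothers : ∀ j' ∈ Finset.univ.erase j, X i j' = 0 ∨ X i j' = 1 := by
      intro j' hj'
      by_contra hc
      push_neg at hc
      exact (h j' (Finset.mem_erase.mp hj').1) ((hmemFs (i, j')).mpr hc)
    have hsum : X i j + ∑ j' ∈ Finset.univ.erase j, X i j' = 1 := by
      rw [Finset.add_sum_erase Finset.univ (fun j' => X i j') (Finset.mem_univ j)]
      exact hX.2.1 i
    by_cases hone : ∃ j' ∈ Finset.univ.erase j, X i j' = 1
    · obtain ⟨j₁, hj₁, hj₁1⟩ := hone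
      have hle : X i j₁ ≤ ∑ j' ∈ Finset.univ.erase j, X i j' :=
        Finset.single_le_sum (fun j'' _ => hX.1 i j'') hj₁
      have hpos : 0 < X i j := lt_of_le_of_ne (hX.1 i j) (Ne.symm hij.1)
      rw [hj₁1] at hle; linarith
    · push_neg at hone
      have hz : ∑ j' ∈ Finset.univ.erase j, X i j' = 0 := by
        refine Finset.sum_eq_zero fun j' hj' => ?_
        rcases hothers j' hj' with h0 | h1
        · exact h0
        · exact absurd h1 (hone j' hj')
      rw [hz] at hsum
      exact hij.2 (by linarith)
  have hcol2 : ∀ i j, (i, j) ∈ Fs → (∑ i', X i' j = 1) → ∃ i', i' ≠ i ∧ (i', j) ∈ Fs := by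
    intro i j hij htight
    rw [hmemFs] at hij
    by_contra h
    push_neg at h
    have hothers : ∀ i' ∈ Finset.univ.erase i, X i' j = 0 ∨ X i' j = 1 := by
      intro i' hi'
      by_contra hc
      push_neg at hc
      exact (h i' (Finset.mem_erase.mp hi').1) ((hmemFs (i', j)).mpr hc)
    have hsum : X i j + ∑ i' ∈ Finset.univ.erase i, X i' j = 1 := by
      rw [Finset.add_sum_erase Finset.univ (fun i' => X i' j) (Finset.mem_univ i)]
      exact htight
    by_cases hone : ∃ i' ∈ Finset.univ.erase i, X i' j = 1
    · obtain ⟨i₁, hi₁, hi₁1⟩ := hone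
      have hle : X i₁ j ≤ ∑ i' ∈ Finset.univ.erase i, X i' j :=
        Finset.single_le_sum (fun i'' _ => hX.1 i'' j) hi₁
      have hpos : 0 < X i j := lt_of_le_of_ne (hX.1 i j) (Ne.symm hij.1)
      rw [hi₁1] at hle; linarith
    · push_neg at hone
      have hz : ∑ i' ∈ Finset.univ.erase i, X i' j = 0 := by
        refine Finset.sum_eq_zero fun i' hi' => ?_
        rcases hothers i' hi' with h0 | h1
        · exact h0
        · exact absurd h1 (hone i' hi')
      rw [hz] at hsum
      exact hij.2 (by linarith)
  set Rs : Finset (Fin M) := Fs.image Prod.fst with hRsdef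
  set Ft : Finset (Fin M × Fin N) := Fs.filter (fun p => ∑ i', X i' p.2 = 1) with hFtdef
  set Ts : Finset (Fin N) := Ft.image Prod.snd with hTsdef
  obtain ⟨i₀, j₀, hfr⟩ := hfrac
  have hp₀ : (i₀, j₀) ∈ Fs := (hmemFs _).mpr hfr
  have hRs_ne : Rs.Nonempty := ⟨i₀, Finset.mem_image_of_mem _ hp₀⟩
  -- 2R ≤ |F|
  have hRcard : 2 * Rs.card ≤ Fs.card := by
    have hfib := Finset.card_eq_sum_card_fiberwise
      (f := Prod.fst) (s := Fs) (t := Rs) (fun p hp => Finset.mem_image_of_mem _ hp)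
    have hge : ∀ i ∈ Rs, 2 ≤ (Fs.filter (fun p => p.1 = i)).card := by
      intro i hi
      obtain ⟨p, hp, hpi⟩ := Finset.mem_image.mp hi
      have hp' : (i, p.2) ∈ Fs := by rwa [← hpi, Prod.mk.eta]
      obtain ⟨j', hj', hj'F⟩ := hrow2 i p.2 hp'
      have hne : ((i, p.2) : Fin M × Fin N) ≠ (i, j') := by
        intro h; exact hj' (congrArg Prod.snd h).symm
      have hsub : ({(i, p.2), (i, j')} : Finset (Fin M × Fin N)) ⊆
          Fs.filter (fun p => p.1 = i) := by
        intro q hq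
        rcases Finset.mem_insert.mp hq with h | h
        · subst h; exact Finset.mem_filter.mpr ⟨hp', rfl⟩
        · rw [Finset.mem_singleton] at h; subst h
          exact Finset.mem_filter.mpr ⟨hj'F, rfl⟩
      calc 2 = ({(i, p.2), (i, j')} : Finset (Fin M × Fin N)).card :=
            (Finset.card_pair hne).symm
        _ ≤ _ := Finset.card_le_card hsub
    calc 2 * Rs.card = ∑ _i ∈ Rs, 2 := by rw [Finset.sum_const, smul_eq_mul, mul_comm]
      _ ≤ ∑ i ∈ Rs, (Fs.filter (fun p => p.1 = i)).card := Finset.sum_le_sum hge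
      _ = Fs.card := hfib.symm
  -- 2T ≤ |Ft|
  have hTcard : 2 * Ts.card ≤ Ft.card := by
    have hfib := Finset.card_eq_sum_card_fiberwise
      (f := Prod.snd) (s := Ft) (t := Ts) (fun p hp => Finset.mem_image_of_mem _ hp)
    have hge : ∀ j ∈ Ts, 2 ≤ (Ft.filter (fun p => p.2 = j)).card := by
      intro j hj
      obtain ⟨p, hp, hpj⟩ := Finset.mem_image.mp hj
      have hpFt := Finset.mem_filter.mp hp
      have htight : ∑ i', X i' j = 1 := by rw [← hpj]; exact hpFt.2
      have hp' : (p.1, j) ∈ Fs := by rw [← hpj, Prod.mk.eta]; exact hpFt.1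
      obtain ⟨i', hi', hi'F⟩ := hcol2 p.1 j hp' htight
      have hne : ((p.1, j) : Fin M × Fin N) ≠ (i', j) := by
        intro h; exact hi' (congrArg Prod.fst h).symm
      have hsub : ({(p.1, j), (i', j)} : Finset (Fin M × Fin N)) ⊆
          Ft.filter (fun p => p.2 = j) := by
        intro q hq
        rcases Finset.mem_insert.mp hq with h | h
        · subst h
          exact Finset.mem_filter.mpr ⟨Finset.mem_filter.mpr ⟨hp', htight⟩, rfl⟩
        · rw [Finset.mem_singleton] at h; subst h
          exact Finset.mem_filter.mpr ⟨Finset.mem_filter.mpr ⟨hi'F, htight⟩, rfl⟩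
      calc 2 = ({(p.1, j), (i', j)} : Finset (Fin M × Fin N)).card :=
            (Finset.card_pair hne).symm
        _ ≤ _ := Finset.card_le_card hsub
    calc 2 * Ts.card = ∑ _j ∈ Ts, 2 := by rw [Finset.sum_const, smul_eq_mul, mul_comm]
      _ ≤ ∑ j ∈ Ts, (Ft.filter (fun p => p.2 = j)).card := Finset.sum_le_sum hge
      _ = Ft.card := hfib.symm
  have hFtsub : Ft ⊆ Fs := Finset.filter_subset _ _
  -- vanishing of sums outside Rs / Ts
  have hrowzero : ∀ (d : {p // p ∈ Fs} → ℝ) (i : Fin M), i ∉ Rs →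
      ∑ j, ext0 Fs d i j = 0 := by
    intro d i hi
    refine Finset.sum_eq_zero fun j _ => ?_
    by_contra hne
    have hmem : (i, j) ∈ Fs := by
      by_contra hmem
      exact hne (ext0_eq_zero_of_not_mem _ _ hmem)
    exact hi (Finset.mem_image_of_mem Prod.fst hmem)
  have hcolzero : ∀ (d : {p // p ∈ Fs} → ℝ) (j : Fin N), j ∉ Ts →
      (∑ i', X i' j = 1) → ∑ i, ext0 Fs d i j = 0 := by
    intro d j hj htight
    refine Finset.sum_eq_zero fun i _ => ?_
    by_contra hne
    have hmem : (i, j) ∈ Fs := by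
      by_contra hmem
      exact hne (ext0_eq_zero_of_not_mem _ _ hmem)
    exact hj (Finset.mem_image_of_mem Prod.snd (Finset.mem_filter.mpr ⟨hmem, htight⟩))
  set L := Lmap Fs Rs Ts with hL
  -- rank bound
  have hcod : Module.finrank ℝ (({i // i ∈ Rs} → ℝ) × ({j // j ∈ Ts} → ℝ)) =
      Rs.card + Ts.card := by
    rw [Module.finrank_prod, Module.finrank_fintype_fun_eq_card,
      Module.finrank_fintype_fun_eq_card, Fintype.card_coe, Fintype.card_coe]
  have hrank : Module.finrank ℝ (LinearMap.range L) < Fs.card := by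
    by_cases hcase : Ft = Fs
    · -- all fractional entries lie in tight columns: one dependency
      have hphi : ∀ d, phiMap Rs Ts (L d) = 0 := by
        intro d
        rw [hL, Lmap_apply, phiMap_apply]
        have h1 : ∑ i : {i // i ∈ Rs}, (∑ j, ext0 Fs d (i : Fin M) j) =
            ∑ p : {p // p ∈ Fs}, d p := by
          rw [Finset.univ_eq_attach, Finset.sum_attach Rs (fun i => ∑ j, ext0 Fs d i j),
            Finset.sum_subset (Finset.subset_univ Rs) (fun i _ hi => hrowzero d i hi),
            sum_sum_ext0]
        have h2 : ∑ j : {j // j ∈ Ts}, (∑ i, ext0 Fs d i (j : Fin N)) =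
            ∑ p : {p // p ∈ Fs}, d p := by
          have hout : ∀ j ∈ Finset.univ, j ∉ Ts → ∑ i, ext0 Fs d i j = 0 := by
            intro j _ hj
            refine Finset.sum_eq_zero fun i _ => ?_
            by_contra hne
            have hmem : (i, j) ∈ Fs := by
              by_contra hmem
              exact hne (ext0_eq_zero_of_not_mem _ _ hmem)
            rw [← hcase] at hmem
            exact hj (Finset.mem_image_of_mem Prod.snd hmem)
          rw [Finset.univ_eq_attach, Finset.sum_attach Ts (fun j => ∑ i, ext0 Fs d i j),
            Finset.sum_subset (Finset.subset_univ Ts) hout, Finset.sum_comm,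
            sum_sum_ext0]
        rw [h1, h2, sub_self]
      have hle : LinearMap.range L ≤ LinearMap.ker (phiMap Rs Ts) := by
        rintro _ ⟨d, rfl⟩
        exact LinearMap.mem_ker.mpr (hphi d)
      have hsurj : Function.Surjective (phiMap Rs Ts) := by
        intro x
        obtain ⟨i₁, hi₁⟩ := hRs_ne
        refine ⟨(Pi.single ⟨i₁, hi₁⟩ x, 0), ?_⟩
        rw [phiMap_apply]
        simp
      have hkerphi : Module.finrank ℝ (LinearMap.ker (phiMap Rs Ts)) + 1 =
          Rs.card + Ts.card := by
        have := LinearMap.finrank_range_add_finrank_ker (phiMap Rs Ts)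
        rw [LinearMap.range_eq_top.mpr hsurj, finrank_top, Module.finrank_self, hcod] at this
        omega
      have h1 : Module.finrank ℝ (LinearMap.range L) ≤
          Module.finrank ℝ (LinearMap.ker (phiMap Rs Ts)) := Submodule.finrank_mono hle
      have hRpos : 0 < Rs.card := Finset.card_pos.mpr hRs_ne
      rw [hcase] at hTcard
      omega
    · -- some fractional entry lies in a non-tight column
      have h1 : Module.finrank ℝ (LinearMap.range L) ≤ Rs.card + Ts.card := by
        rw [← hcod]; exact Submodule.finrank_le _
      have hlt : Ft.card < Fs.card :=
        Finset.card_lt_card (lt_of_le_of_ne hFtsub hcase)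
      omega
  have hdom : Module.finrank ℝ ({p // p ∈ Fs} → ℝ) = Fs.card := by
    rw [Module.finrank_fintype_fun_eq_card, Fintype.card_coe]
  have hker : LinearMap.ker L ≠ ⊥ := by
    intro hbot
    have := LinearMap.finrank_range_add_finrank_ker L
    rw [hdom, hbot, finrank_bot] at this
    omega
  obtain ⟨d, hdker, hd0⟩ := Submodule.exists_mem_ne_zero_of_ne_bot hker
  have hLd : L d = 0 := LinearMap.mem_ker.mp hdker
  refine ⟨ext0 Fs d, ?_, ?_, ?_, ?_⟩
  · -- nonzero
    intro hD0
    apply hd0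
    funext p
    have := ext0_coe Fs d p
    rw [hD0] at this
    simpa using this.symm
  · -- support
    intro i j hne
    have hmem : (i, j) ∈ Fs := by
      by_contra hmem
      exact hne (ext0_eq_zero_of_not_mem _ _ hmem)
    exact (hmemFs _).mp hmem
  · -- row sums
    intro i
    by_cases hi : i ∈ Rs
    · have := congrFun (congrArg Prod.fst hLd) ⟨i, hi⟩
      simpa [hL, Lmap_apply] using this
    · exact hrowzero d i hi
  · -- tight column sums
    intro j htight
    by_cases hj : j ∈ Ts
    · have := congrFun (congrArg Prod.snd hLd) ⟨j, hj⟩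
      simpa [hL, Lmap_apply] using this
    · exact hcolzero d j hj htight



lemma exists_eps {ι : Type*} [Fintype ι] (a b : ι → ℝ) (h0 : ∀ k, 0 ≤ b k)
    (h : ∀ k, a k ≠ 0 → 0 < b k) : ∃ ε : ℝ, 0 < ε ∧ ∀ k, ε * |a k| ≤ b k := by
  classical
  rcases isEmpty_or_nonempty ι with hι | hι
  · exact ⟨1, one_pos, fun k => isEmptyElim k⟩
  · set c : ι → ℝ := fun k => if a k = 0 then 1 else b k / |a k| with hc
    have hcpos : ∀ k, 0 < c k := by
      intro k
      by_cases hk : a k = 0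
      · simp [hc, hk]
      · simp only [hc, if_neg hk]
        exact div_pos (h k hk) (abs_pos.mpr hk)
    refine ⟨Finset.univ.inf' Finset.univ_nonempty c, ?_, ?_⟩
    · rw [Finset.lt_inf'_iff]
      exact fun k _ => hcpos k
    · intro k
      have hle : Finset.univ.inf' Finset.univ_nonempty c ≤ c k :=
        Finset.inf'_le c (Finset.mem_univ k)
      by_cases hk : a k = 0
      · rw [hk, abs_zero, mul_zero]; exact h0 k
      · have hck : c k = b k / |a k| := if_neg hk
        rw [hck] at hle
        have habs : 0 < |a k| := abs_pos.mpr hk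
        calc Finset.univ.inf' Finset.univ_nonempty c * |a k|
            ≤ (b k / |a k|) * |a k| := mul_le_mul_of_nonneg_right hle habs.le
          _ = b k := div_mul_cancel₀ _ habs.ne'


lemma extreme_subset_partialPerm {M N : ℕ} :
    Set.extremePoints ℝ (Omega M N) ⊆ PartialPerm M N := by
  intro X hXe
  rw [mem_extremePoints] at hXe
  obtain ⟨hXO, hext⟩ := hXe
  refine ⟨?_, hXO.2.1, hXO.2.2⟩
  by_contra h
  push_neg at h
  obtain ⟨i₀, j₀, h₀⟩ := h
  obtain ⟨D, hD0, hsupp, hrow, hcol⟩ := exists_perturbation hXO ⟨i₀, j₀, h₀⟩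
  obtain ⟨ε, hεpos, hεle⟩ := exists_eps (ι := (Fin M × Fin N) ⊕ Fin N)
    (Sum.elim (fun p => D p.1 p.2) (fun j => ∑ i, D i j))
    (Sum.elim (fun p => X p.1 p.2) (fun j => 1 - ∑ i, X i j))
    (by
      rintro (p | j)
      · exact hXO.1 p.1 p.2
      · simpa using hXO.2.2 j)
    (by
      rintro (p | j) hk
      · simp only [Sum.elim_inl] at hk ⊢
        exact lt_of_le_of_ne (hXO.1 p.1 p.2) (Ne.symm (hsupp p.1 p.2 hk).1)
      · simp only [Sum.elim_inr] at hk ⊢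
        have : ∑ i, X i j ≠ 1 := fun ht => hk (hcol j ht)
        have := lt_of_le_of_ne (hXO.2.2 j) this
        linarith)
  have hεa : ∀ i j, ε * |D i j| ≤ X i j := fun i j => hεle (Sum.inl (i, j))
  have hεb : ∀ j, ε * |∑ i, D i j| ≤ 1 - ∑ i, X i j := fun j => hεle (Sum.inr j)
  have happ : ∀ (s : ℝ) i j, (X + s • D) i j = X i j + s * D i j := by
    intro s i j; simp [Matrix.add_apply, Matrix.smul_apply, smul_eq_mul]
  have habs : ∀ (x : ℝ), |ε * x| = ε * |x| := fun x => by
    rw [abs_mul, abs_of_pos hεpos]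
  have hmem : ∀ s : ℝ, |s| = ε → (X + s • D) ∈ Omega M N := by
    intro s hs
    have hsabs : ∀ x : ℝ, |s * x| ≤ ε * |x| := by
      intro x; rw [abs_mul, hs]
    refine ⟨fun i j => ?_, fun i => ?_, fun j => ?_⟩
    · rw [happ]
      have h1 : |s * D i j| ≤ ε * |D i j| := hsabs (D i j)
      have h2 := hεa i j
      have h3 := neg_abs_le (s * D i j)
      linarith
    · simp only [happ, Finset.sum_add_distrib, ← Finset.mul_sum, hXO.2.1 i, hrow i,
        mul_zero, add_zero]
    · simp only [happ, Finset.sum_add_distrib, ← Finset.mul_sum]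
      have h1 : |s * ∑ i, D i j| ≤ ε * |∑ i, D i j| := hsabs _
      have h2 := hεb j
      have h3 := le_abs_self (s * ∑ i, D i j)
      linarith
  have hP : (X + ε • D) ∈ Omega M N := hmem ε (abs_of_pos hεpos)
  have hMm : (X + (-ε) • D) ∈ Omega M N := hmem (-ε) (by rw [abs_neg, abs_of_pos hεpos])
  have hseg : X ∈ openSegment ℝ (X + ε • D) (X + (-ε) • D) := by
    refine ⟨1/2, 1/2, by norm_num, by norm_num, by norm_num, ?_⟩
    module
  have := (hext _ hP _ hMm hseg).1
  have hzero : ε • D = 0 := by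
    have h' : X + ε • D = X + 0 := by rw [add_zero]; exact this
    exact add_left_cancel h'
  rcases smul_eq_zero.mp hzero with h | h
  · exact hεpos.ne' h
  · exact hD0 h


/-- The extreme points of the compact convex polytope Ω are exactly the partial
permutation matrices. -/
theorem extremePoints_omega (M N : ℕ) (hM : 0 < M) (hMN : M ≤ N) :
    IsCompact (Omega M N) ∧ Convex ℝ (Omega M N) ∧
      Set.extremePoints ℝ (Omega M N) = PartialPerm M N := by
  exact ⟨omega_isCompact M N, omega_convex M N,
    Set.Subset.antisymm extreme_subset_partialPerm partialPerm_subset_extreme⟩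
end
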